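/- Let n ≥ 3 and let K ⊆ ℝⁿ be a centrally symmetric convex polytope with nonempty interior having exactly 2m vertices, where m ≥ n. Set t = 2^{n/m}. Then Γ_{2^n}(K) ≤ m/(m + l(m, t)) ≤ m/(m + ⌊b(t)·m⌋). -/

import Mathlib

open Real Set Pointwise

/-- The covering functional `Γ_m(K)`: the infimum of all `γ > 0` such that `K` can be
covered by `m` translates of `γ • K`. -/
noncomputable def coveringFunctional {n : ℕ} (m : ℕ) (K : Set (Fin n → ℝ)) : ℝ :=
  sInf {γ : ℝ | 0 < γ ∧ ∃ C : Set (Fin n → ℝ), C.Finite ∧ C.ncard = m ∧ K ⊆ C + γ • K}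

/-- `g x = 2^x * (1+x)^(1+x) / x^x` (real powers). -/
noncomputable def g (x : ℝ) : ℝ := 2 ^ x * (1 + x) ^ (1 + x) / x ^ x

section AuxLemmas

lemma aux_sum_adjust {ι : Type*} [DecidableEq ι] (s : Finset ι) (f : ι → ℕ) :
    ∀ c : ℕ, c ≤ ∑ i ∈ s, f i → ∃ g : ι → ℕ, (∀ i, g i ≤ f i) ∧ ∑ i ∈ s, g i = c := by
  induction s using Finset.induction with
  | empty => intro c hc; simp at hc; exact ⟨fun _ => 0, fun i => Nat.zero_le _, by simp [hc]⟩
  | insert a s' hnotmem ih =>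
    intro c hc
    rw [Finset.sum_insert hnotmem] at hc
    obtain ⟨g, hg, hgsum⟩ := ih (min c (∑ i ∈ s', f i)) (min_le_right _ _)
    refine ⟨fun i => if i = a then c - min c (∑ i ∈ s', f i) else g i, ?_, ?_⟩
    · intro i; by_cases h : i = a
      · subst h; simp; omega
      · simpa [h] using hg i
    · rw [Finset.sum_insert hnotmem, if_pos rfl,
        Finset.sum_congr rfl (fun i hi => if_neg (by rintro rfl; exact hnotmem hi)), hgsum]
      omega

lemma aux_pairing {α : Type*} [DecidableEq α] :
    ∀ (m : ℕ) (s : Finset α) (f : α → α), (∀ x ∈ s, f x ∈ s) → (∀ x ∈ s, f (f x) = x) →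
    (∀ x ∈ s, f x ≠ x) → s.card = 2 * m →
    ∃ w : Fin m → α, (∀ i, w i ∈ s) ∧ (∀ x ∈ s, ∃ i, x = w i ∨ x = f (w i)) := by
  intro m
  induction m with
  | zero =>
    intro s f _ _ _ hcard
    rw [Nat.mul_zero, Finset.card_eq_zero] at hcard
    subst hcard
    exact ⟨Fin.elim0, fun i => i.elim0, fun x hx => absurd hx (by simp)⟩
  | succ m ih =>
    intro s f hmem hinv hne hcard
    have hs : s.Nonempty := Finset.card_pos.mp (by omega)
    obtain ⟨a, ha⟩ := hs
    have hfa : f a ∈ s := hmem a ha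
    have hfane : f a ≠ a := hne a ha
    set s' := (s.erase a).erase (f a) with hs'
    have hsub : s' ⊆ s := (Finset.erase_subset _ _).trans (Finset.erase_subset _ _)
    have hcard' : s'.card = 2 * m := by
      rw [hs', Finset.card_erase_of_mem (Finset.mem_erase.mpr ⟨hfane, hfa⟩),
        Finset.card_erase_of_mem ha, hcard]; omega
    have hmem' : ∀ x ∈ s', x ∈ s ∧ x ≠ a ∧ x ≠ f a := by
      intro x hx
      rw [hs', Finset.mem_erase, Finset.mem_erase] at hx
      exact ⟨hx.2.2, hx.2.1, hx.1⟩
    have hmemin : ∀ x, x ∈ s → x ≠ a → x ≠ f a → x ∈ s' := by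
      intro x h1 h2 h3
      rw [hs', Finset.mem_erase, Finset.mem_erase]
      exact ⟨h3, h2, h1⟩
    obtain ⟨w', hw'mem, hw'cov⟩ := ih s' f
      (by
        intro x hx
        obtain ⟨hxs, hxa, hxfa⟩ := hmem' x hx
        refine hmemin _ (hmem x hxs) (fun h => hxfa ?_) (fun h => hxa ?_)
        · rw [← hinv x hxs, h]
        · have := congrArg f h
          rwa [hinv x hxs, hinv a ha] at this)
      (fun x hx => hinv x (hmem' x hx).1) (fun x hx => hne x (hmem' x hx).1) hcard'
    refine ⟨Fin.cons a w', ?_, ?_⟩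
    · intro i
      refine Fin.cases ?_ ?_ i
      · simpa using ha
      · intro j; simpa using hsub (hw'mem j)
    · intro x hx
      by_cases h1 : x = a
      · exact ⟨0, Or.inl (by simp [h1])⟩
      by_cases h2 : x = f a
      · exact ⟨0, Or.inr (by simp [h2])⟩
      obtain ⟨i, hi⟩ := hw'cov x (hmemin x hx h1 h2)
      exact ⟨i.succ, by simpa using hi⟩

lemma aux_absHull_convex {V : Type*} [AddCommGroup V] [Module ℝ V] {m : ℕ}
    (c : V) (w : Fin m → V) :
    Convex ℝ {y : V | ∃ lam : Fin m → ℝ, (∑ i, |lam i|) ≤ 1 ∧ y = c + ∑ i, lam i • w i} := by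
  rintro x ⟨lx, hlx, rfl⟩ y ⟨ly, hly, rfl⟩ p q hp hq hpq
  refine ⟨fun i => p * lx i + q * ly i, ?_, ?_⟩
  · calc ∑ i, |p * lx i + q * ly i| ≤ ∑ i, (p * |lx i| + q * |ly i|) := by
          refine Finset.sum_le_sum fun i _ => ?_
          calc |p * lx i + q * ly i| ≤ |p * lx i| + |q * ly i| := abs_add_le _ _
          _ = p * |lx i| + q * |ly i| := by rw [abs_mul, abs_mul, abs_of_nonneg hp, abs_of_nonneg hq]
    _ = p * ∑ i, |lx i| + q * ∑ i, |ly i| := by rw [Finset.mul_sum, Finset.mul_sum, Finset.sum_add_distrib]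
    _ ≤ p * 1 + q * 1 := by gcongr <;> assumption
    _ = 1 := by rw [mul_one, mul_one, hpq]
  · have : ∀ (z : V) (lz : Fin m → ℝ) (r : ℝ), r • (z + ∑ i, lz i • w i) = r • z + ∑ i, (r * lz i) • w i := by
      intro z lz r
      rw [smul_add, Finset.smul_sum]
      congr 1
      exact Finset.sum_congr rfl fun i _ => smul_smul r (lz i) (w i)
    rw [this, this]
    have hc : p • c + q • c = c := by rw [← add_smul, hpq, one_smul]
    rw [add_add_add_comm, hc, ← Finset.sum_add_distrib]
    congr 1
    exact Finset.sum_congr rfl fun i _ => (add_smul _ _ _).symm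

lemma aux_abs_mem {V : Type*} [AddCommGroup V] [Module ℝ V] {m : ℕ} (hm : 0 < m)
    {K : Set V} (hK : Convex ℝ K) (c : V) (w : Fin m → V)
    (hw : ∀ i, c + w i ∈ K ∧ c - w i ∈ K) (nu : Fin m → ℝ) (hnu : (∑ i, |nu i|) ≤ 1) :
    c + ∑ i, nu i • w i ∈ K := by
  classical
  -- weights over Fin m ⊕ Bool
  set i0 : Fin m := ⟨0, hm⟩
  set f : Fin m ⊕ Bool → ℝ := Sum.elim (fun i => |nu i|) (fun _ => (1 - ∑ i, |nu i|) / 2) with hf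
  set q : Fin m ⊕ Bool → V := Sum.elim (fun i => if 0 ≤ nu i then c + w i else c - w i)
    (fun b => if b then c + w i0 else c - w i0) with hq
  have hf0 : ∀ j, 0 ≤ f j := by
    rintro (i | b)
    · simp only [hf, Sum.elim_inl]; positivity
    · simp only [hf, Sum.elim_inr]; linarith
  have hfsum : ∑ j : Fin m ⊕ Bool, f j = 1 := by
    rw [Fintype.sum_sum_type]
    simp [hf]
    ring
  have hqK : ∀ j, q j ∈ K := by
    rintro (i | b)
    · by_cases h : 0 ≤ nu i <;> simp [hq, h, (hw i).1, (hw i).2]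
    · by_cases h : b <;> simp [hq, h, (hw i0).1, (hw i0).2]
  have := hK.sum_mem (t := Finset.univ) (fun j _ => hf0 j) hfsum (fun j _ => hqK j)
  convert this using 1
  rw [Fintype.sum_sum_type]
  have h1 : ∀ i : Fin m, f (Sum.inl i) • q (Sum.inl i) = |nu i| • c + nu i • w i := by
    intro i
    by_cases h : 0 ≤ nu i
    · simp only [hf, hq, Sum.elim_inl, if_pos h, smul_add]
      rw [abs_of_nonneg h]
    · simp only [hf, hq, Sum.elim_inl, if_neg h, smul_sub]
      rw [abs_of_neg (not_le.mp h)]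
      module
  have h2 : ∑ b : Bool, f (Sum.inr b) • q (Sum.inr b) = (1 - ∑ i, |nu i|) • c := by
    simp only [hf, hq, Sum.elim_inr, Fintype.sum_bool, if_pos, if_neg Bool.false_ne_true]
    rw [smul_add, smul_sub]
    module
  rw [Finset.sum_congr rfl (fun i _ => h1 i), h2, Finset.sum_add_distrib, ← Finset.sum_smul]
  module

section count
variable {m l : ℕ}

/-- extension of `natAbs ∘ k` to ℕ -/
private def kext (m : ℕ) (k : Fin m → ℤ) : ℕ → ℕ := fun j => if h : j < m then (k ⟨j, h⟩).natAbs else 0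

private def kP (m : ℕ) (k : Fin m → ℤ) : ℕ → ℕ := fun j => ∑ i ∈ Finset.range j, kext m k i

lemma kP_mono (k : Fin m → ℤ) : Monotone (kP m k) := fun i j hij =>
  Finset.sum_le_sum_of_subset (Finset.range_subset_range.mpr hij)

lemma kP_le (k : Fin m → ℤ) (hk : ∑ i, (k i).natAbs ≤ l) (j : ℕ) : kP m k j ≤ l := by
  have h1 : kP m k j ≤ kP m k m := by
    rcases le_total j m with h | h
    · exact kP_mono k h
    · apply le_of_eq; unfold kP
      rw [← Finset.sum_range_add_sum_Ico _ h]
      have : ∑ i ∈ Finset.Ico m j, kext m k i = 0 :=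
        Finset.sum_eq_zero fun i hi => by
          simp [kext, Nat.not_lt.mpr (Finset.mem_Ico.mp hi).1]
      omega
  have h2 : kP m k m = ∑ i, (k i).natAbs := by
    unfold kP
    rw [Finset.sum_range fun j => kext m k j]
    exact Finset.sum_congr rfl fun i _ => by simp [kext, i.isLt]
  omega

lemma kP_succ (k : Fin m → ℤ) (i : Fin m) : kP m k (i + 1) = kP m k i + (k i).natAbs := by
  unfold kP
  rw [Finset.sum_range_succ]
  simp [kext, i.isLt]

lemma kP_gap (k : Fin m → ℤ) {i i' : Fin m} (h : (i:ℕ) < i') : kP m k i + (k i).natAbs ≤ kP m k i' := by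
  rw [← kP_succ]
  exact kP_mono k h

lemma aux_count (m l : ℕ) :
    ∃ D : Finset (Fin m → ℤ),
      (∀ k : Fin m → ℤ, (∑ i, (k i).natAbs) ≤ l ↔ k ∈ D) ∧
      D.card ≤ 2 ^ l * (m + l).choose m := by
  classical
  set D : Finset (Fin m → ℤ) :=
    (Finset.Icc (fun _ => -(l:ℤ)) (fun _ => (l:ℤ))).filter (fun k => ∑ i, (k i).natAbs ≤ l) with hD
  have hmem : ∀ k : Fin m → ℤ, (∑ i, (k i).natAbs) ≤ l ↔ k ∈ D := by
    intro k
    constructor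
    · intro hk
      rw [hD, Finset.mem_filter]
      refine ⟨Finset.mem_Icc.mpr ⟨?_, ?_⟩, hk⟩ <;> intro i <;>
      · have : (k i).natAbs ≤ l := le_trans (Finset.single_le_sum (f := fun i => (k i).natAbs) (fun _ _ => Nat.zero_le _) (Finset.mem_univ i)) hk
        simp only [Pi.le_def]
        omega
    · intro hk; exact (Finset.mem_filter.mp hk).2
  refine ⟨D, hmem, ?_⟩
  -- injection into powersetCard × signs
  have hblt : ∀ (k : Fin m → ℤ), (∑ i, (k i).natAbs ≤ l) → ∀ i : Fin m, kP m k (i+1) + i < m + l := by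
    intro k hk i
    have h1 : kP m k (i+1) ≤ l := kP_le k hk _
    have h2 : (i:ℕ) < m := i.isLt
    omega
  set Φ : (Fin m → ℤ) → Finset (Fin (m+l)) × (Fin l → Bool) := fun k =>
    (if hk : ∑ i, (k i).natAbs ≤ l then
      Finset.image (fun i : Fin m => (⟨kP m k (i+1) + i, hblt k hk i⟩ : Fin (m+l))) Finset.univ
     else ∅,
     fun p => decide (∃ i : Fin m, 0 < k i ∧ kP m k i = (p:ℕ))) with hΦ
  have hsm : ∀ (k : Fin m → ℤ) (hk : ∑ i, (k i).natAbs ≤ l),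
      StrictMono (fun i : Fin m => (⟨kP m k (i+1) + i, hblt k hk i⟩ : Fin (m+l))) := by
    intro k hk i j hij
    have h1 : kP m k (i+1) ≤ kP m k (j+1) := kP_mono k (by omega)
    have : (i:ℕ) < j := hij
    simp only [Fin.mk_lt_mk]
    omega
  have hinj : Set.InjOn Φ D := by
    intro k hk k' hk' heq
    have hks : ∑ i, (k i).natAbs ≤ l := (hmem k).mpr hk
    have hks' : ∑ i, (k' i).natAbs ≤ l := (hmem k').mpr hk'
    have hB : (Φ k).1 = (Φ k').1 := congrArg Prod.fst heq
    have hσ : (Φ k).2 = (Φ k').2 := congrArg Prod.snd heq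
    rw [hΦ] at hB
    simp only [dif_pos hks, dif_pos hks'] at hB
    -- the two strict monos have the same image
    set f := fun i : Fin m => (⟨kP m k (i+1) + i, hblt k hks i⟩ : Fin (m+l))
    set f' := fun i : Fin m => (⟨kP m k' (i+1) + i, hblt k' hks' i⟩ : Fin (m+l))
    have hcard : (Finset.image f Finset.univ).card = m := by
      rw [Finset.card_image_of_injective _ (hsm k hks).injective, Finset.card_univ, Fintype.card_fin]
    have hf : f = f' := by
      have h1 := Finset.orderEmbOfFin_unique hcard (fun x => Finset.mem_image_of_mem f (Finset.mem_univ x)) (hsm k hks)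
      have h2 := Finset.orderEmbOfFin_unique hcard (fun x => by rw [hB]; exact Finset.mem_image_of_mem f' (Finset.mem_univ x)) (hsm k' hks')
      exact h1.trans h2.symm
    -- deduce equal partial sums and abs values
    have hP : ∀ j : ℕ, j ≤ m → kP m k j = kP m k' j := by
      intro j hj
      rcases Nat.eq_zero_or_pos j with h0 | h0
      · subst h0; unfold kP; simp
      · obtain ⟨i, hi⟩ : ∃ i : Fin m, (i:ℕ) + 1 = j := ⟨⟨j - 1, by omega⟩, by simp; omega⟩
        subst hi
        have := congrFun hf i
        simp only [f, f', Fin.mk.injEq] at this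
        omega
    have habs : ∀ i : Fin m, (k i).natAbs = (k' i).natAbs := by
      intro i
      have h1 := kP_succ k i
      have h2 := kP_succ k' i
      have h3 := hP i (by omega)
      have h4 := hP (i+1) i.isLt
      omega
    -- recover signs
    funext i
    rcases Nat.eq_zero_or_pos (k i).natAbs with h0 | h0
    · have h0' := habs i; omega
    · have hPi := hP i (le_of_lt i.isLt)
      have hPl : kP m k i < l := by
        have := kP_succ k i
        have := kP_le k hks (i+1)
        omega
      have key : ∀ (kk : Fin m → ℤ), (∑ i, (kk i).natAbs ≤ l) → (kk i).natAbs = (k i).natAbs →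
          kP m kk i = kP m k i →
          ((∃ i' : Fin m, 0 < kk i' ∧ kP m kk i' = kP m k i) ↔ 0 < kk i) := by
        intro kk hkk habsi hPkk
        constructor
        · rintro ⟨i', hi'pos, hi'⟩
          have : i' = i := by
            by_contra hne
            have hne' : (i':ℕ) ≠ (i:ℕ) := fun h => hne (Fin.ext h)
            have habs' : 0 < (kk i').natAbs := by omega
            rcases Nat.lt_or_ge (i':ℕ) (i:ℕ) with hlt | hge
            · have := kP_gap kk hlt
              omega
            · have : (i:ℕ) < i' := by omega
              have := kP_gap kk this
              omega
          rwa [this] at hi'pos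
        · intro hpos
          exact ⟨i, hpos, by omega⟩
      have e1 := key k hks rfl rfl
      have e2 := key k' hks' (habs i).symm hPi.symm
      have hde : decide (∃ i' : Fin m, 0 < k i' ∧ kP m k i' = ((⟨kP m k i, hPl⟩ : Fin l) : ℕ))
          = decide (∃ i' : Fin m, 0 < k' i' ∧ kP m k' i' = ((⟨kP m k i, hPl⟩ : Fin l) : ℕ)) :=
        congrFun hσ ⟨kP m k i, hPl⟩
      simp only [decide_eq_decide] at hde
      have hiff : 0 < k i ↔ 0 < k' i := by
        rw [← e1, ← e2]
        exact hde
      have h5 := habs i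
      clear * - h5 hiff
      omega
  -- cardinality
  have hmaps : ∀ k ∈ D, Φ k ∈ (Finset.powersetCard m (Finset.univ : Finset (Fin (m+l)))) ×ˢ (Finset.univ : Finset (Fin l → Bool)) := by
    intro k hk
    have hks : ∑ i, (k i).natAbs ≤ l := (hmem k).mpr hk
    rw [Finset.mem_product]
    constructor
    · rw [hΦ]
      simp only [dif_pos hks]
      rw [Finset.mem_powersetCard]
      refine ⟨Finset.subset_univ _, ?_⟩
      rw [Finset.card_image_of_injective _ (hsm k hks).injective, Finset.card_univ, Fintype.card_fin]
    · exact Finset.mem_univ _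
  calc D.card ≤ ((Finset.powersetCard m (Finset.univ : Finset (Fin (m+l)))) ×ˢ (Finset.univ : Finset (Fin l → Bool))).card :=
        Finset.card_le_card_of_injOn Φ hmaps hinj
    _ = 2 ^ l * (m + l).choose m := by
        rw [Finset.card_product, Finset.card_powersetCard, Finset.card_univ, Finset.card_univ,
          Fintype.card_fin, Fintype.card_fun]
        simp [mul_comm]
end count

noncomputable def Faux (M : ℝ) (x : ℝ) : ℝ :=
  x * Real.log 2 + (M + x) * Real.log (M + x) - x * Real.log x

lemma Faux_hasDeriv (M : ℝ) (hM : 0 < M) {x : ℝ} (hx : 0 < x) :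
    HasDerivAt (Faux M) (Real.log 2 + (Real.log (M + x) + 1) - (Real.log x + 1)) x := by
  have h1 : HasDerivAt (fun y : ℝ => y * Real.log 2) (1 * Real.log 2) x :=
    (hasDerivAt_id x).mul_const _
  have h2 : HasDerivAt (fun y : ℝ => (M + y) * Real.log (M + y)) ((Real.log (M + x) + 1) * 1) x := by
    have hne : M + x ≠ 0 := by positivity
    exact (Real.hasDerivAt_mul_log hne).comp x ((hasDerivAt_id x).const_add M)
  have h3 : HasDerivAt (fun y : ℝ => y * Real.log y) (Real.log x + 1) x :=
    Real.hasDerivAt_mul_log hx.ne'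
  have := (h1.add h2).sub h3
  simp only [one_mul, mul_one] at this
  exact this

lemma Faux_monotoneOn (M : ℝ) (hM : 0 < M) : MonotoneOn (Faux M) (Set.Ici (1 : ℝ)) := by
  have hderiv : ∀ x ∈ interior (Set.Ici (1:ℝ)), 0 ≤ deriv (Faux M) x := by
    intro x hx
    rw [interior_Ici] at hx
    have hx1 : (1:ℝ) < x := hx
    have h := (Faux_hasDeriv M hM (by linarith)).deriv
    rw [h]
    have hlog : Real.log x ≤ Real.log (M + x) := Real.log_le_log (by linarith) (by linarith)
    have h2 : 0 ≤ Real.log 2 := Real.log_nonneg (by norm_num)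
    linarith
  have hcont : ContinuousOn (Faux M) (Set.Ici (1:ℝ)) := by
    intro x hx
    have hx1 : (1:ℝ) ≤ x := hx
    exact ((Faux_hasDeriv M hM (by linarith)).continuousAt).continuousWithinAt
  exact monotoneOn_of_deriv_nonneg (convex_Ici 1) hcont
    (fun x hx => ((Faux_hasDeriv M hM
      (by rw [interior_Ici] at hx; exact lt_trans one_pos hx)).differentiableAt).differentiableWithinAt)
    hderiv

lemma exp_Faux (M : ℝ) (hM : 0 < M) {x : ℝ} (hx : 0 < x) :
    Real.exp (Faux M x) = 2 ^ x * (M + x) ^ (M + x) / x ^ x := by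
  rw [Real.rpow_def_of_pos two_pos, Real.rpow_def_of_pos (by linarith : (0:ℝ) < M + x),
    Real.rpow_def_of_pos hx, Faux, Real.exp_sub, Real.exp_add, mul_comm (Real.log 2) x,
    mul_comm (Real.log x) x, mul_comm (Real.log (M+x)) (M+x)]

lemma aux_floor_le (m l : ℕ) (hm : 3 ≤ m) (b : ℝ) (hb : 0 < b)
    (t : ℝ) (hgb : g b = t)
    (hl2 : t ^ m < (2 ^ (l + 1) * (m + l + 1).choose m : ℝ)) : ⌊b * (m : ℝ)⌋₊ ≤ l := by
  set M : ℝ := (m : ℝ) with hMdef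
  have hm0 : 0 < m := by omega
  have hM : 0 < M := by rw [hMdef]; exact_mod_cast hm0
  have hfloor : b * M < (l:ℝ) + 1 → ⌊b * M⌋₊ ≤ l := by
    intro h
    have h' : b * M < ((l + 1 : ℕ) : ℝ) := by push_cast; linarith
    have := (Nat.floor_lt (by positivity : (0:ℝ) ≤ b * M)).mpr h'
    omega
  apply hfloor
  by_contra hcon
  push_neg at hcon
  set j : ℕ := l + 1 with hj
  set J : ℝ := (j : ℝ) with hJdef
  have hJ1 : (1:ℝ) ≤ J := by rw [hJdef, hj]; push_cast; linarith
  have hJ0 : (0:ℝ) < J := lt_of_lt_of_le one_pos hJ1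
  have hJbM : J ≤ b * M := by rw [hJdef, hj]; push_cast; linarith
  have h1bM : (1:ℝ) ≤ b * M := le_trans hJ1 hJbM
  -- Step A: binomial bound (nat)
  have hnatA : (m + j).choose m * (m ^ m * j ^ j) ≤ (m + j) ^ (m + j) := by
    have hexp : (m + j) ^ (m + j)
        = ∑ k ∈ Finset.range (m + j + 1), m ^ k * j ^ (m + j - k) * (m + j).choose k :=
      add_pow m j (m + j)
    rw [hexp]
    calc (m + j).choose m * (m ^ m * j ^ j)
        = m ^ m * j ^ (m + j - m) * (m + j).choose m := by rw [Nat.add_sub_cancel_left]; ring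
      _ ≤ _ := Finset.single_le_sum (f := fun k => m ^ k * j ^ (m + j - k) * (m + j).choose k)
            (fun _ _ => Nat.zero_le _) (Finset.mem_range.mpr (by omega))
  -- Step B
  have hrealA : ((m + j).choose m : ℝ) * (M ^ M * J ^ J) ≤ (M + J) ^ (M + J) := by
    have h2 : ((m + j).choose m : ℝ) * ((m:ℝ) ^ (m:ℕ) * (j:ℝ) ^ (j:ℕ))
        ≤ ((m:ℝ) + (j:ℝ)) ^ ((m + j : ℕ)) := by exact_mod_cast hnatA
    rw [← Real.rpow_natCast ((m:ℝ)) m, ← Real.rpow_natCast ((j:ℝ)) j,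
      ← Real.rpow_natCast ((m:ℝ) + (j:ℝ)) (m + j)] at h2
    have hmj : (((m + j : ℕ)) : ℝ) = M + J := by push_cast [hMdef, hJdef]; ring
    rw [hmj] at h2
    exact h2
  have hBexp : (2:ℝ) ^ (j:ℕ) * ((m + j).choose m : ℝ) * M ^ M ≤ Real.exp (Faux M J) := by
    rw [exp_Faux M hM hJ0]
    have h2J : (2:ℝ) ^ (j:ℕ) = (2:ℝ) ^ J := by rw [hJdef, Real.rpow_natCast]
    rw [h2J, div_eq_mul_inv]
    calc (2:ℝ) ^ J * ((m + j).choose m : ℝ) * M ^ M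
        = ((m + j).choose m : ℝ) * (M ^ M * J ^ J) * (J ^ J)⁻¹ * (2:ℝ) ^ J := by
          field_simp
      _ ≤ (M + J) ^ (M + J) * (J ^ J)⁻¹ * (2:ℝ) ^ J := by
          gcongr
      _ = 2 ^ J * (M + J) ^ (M + J) * (J ^ J)⁻¹ := by ring
  -- Step C: monotonicity
  have hmono : Faux M J ≤ Faux M (b * M) :=
    Faux_monotoneOn M hM (Set.mem_Ici.mpr hJ1) (Set.mem_Ici.mpr h1bM) hJbM
  -- Step D
  have h1b : (0:ℝ) < 1 + b := by linarith
  have hD : Real.exp (Faux M (b * M)) = g b ^ (m:ℕ) * M ^ M := by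
    rw [exp_Faux M hM (by positivity : (0:ℝ) < b * M), g]
    have hMb : M + b * M = M * (1 + b) := by ring
    rw [hMb, Real.mul_rpow (le_of_lt hM) (le_of_lt h1b),
      Real.mul_rpow (le_of_lt hb) (le_of_lt hM)]
    have e1 : ((2:ℝ) ^ b * (1 + b) ^ (1 + b) / b ^ b) ^ (m:ℕ)
        = (2:ℝ) ^ (b * M) * (1 + b) ^ ((1 + b) * M) / b ^ (b * M) := by
      rw [div_pow, mul_pow, ← Real.rpow_natCast ((2:ℝ)^b) m, ← Real.rpow_natCast ((1+b)^(1+b)) m,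
        ← Real.rpow_natCast ((b:ℝ)^b) m, ← Real.rpow_mul (by norm_num : (0:ℝ) ≤ 2),
        ← Real.rpow_mul (le_of_lt h1b), ← Real.rpow_mul (le_of_lt hb)]
    rw [e1]
    have hsplit : (1 + b) ^ (M * (1 + b)) = (1+b) ^ M * (1+b) ^ (b * M) := by
      rw [← Real.rpow_add h1b]
      ring_nf
    have hsplit2 : (1 + b) ^ ((1 + b) * M) = (1+b) ^ M * (1+b) ^ (b * M) := by
      rw [← Real.rpow_add h1b]
      ring_nf
    rw [hsplit, hsplit2]
    have hbMpos : (0:ℝ) < b ^ (b * M) := Real.rpow_pos_of_pos hb _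
    have hMpos2 : (0:ℝ) < M ^ (b * M) := Real.rpow_pos_of_pos hM _
    have hMM : M ^ (M * (1 + b)) = M ^ M * M ^ (b * M) := by
      rw [← Real.rpow_add hM]; ring_nf
    rw [hMM]
    field_simp
  -- conclude
  have hfinal : (2 ^ (l + 1) * (m + l + 1).choose m : ℝ) * M ^ M ≤ t ^ m * M ^ M := by
    have e2 : ((m + l + 1).choose m : ℝ) = ((m + j).choose m : ℝ) := by rw [hj]; norm_num [← Nat.add_assoc]
    calc (2 ^ (l + 1) * (m + l + 1).choose m : ℝ) * M ^ M
        = (2:ℝ) ^ (j:ℕ) * ((m + j).choose m : ℝ) * M ^ M := by rw [hj, e2]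
      _ ≤ Real.exp (Faux M J) := hBexp
      _ ≤ Real.exp (Faux M (b * M)) := Real.exp_le_exp.mpr hmono
      _ = g b ^ (m:ℕ) * M ^ M := hD
      _ = t ^ m * M ^ M := by rw [hgb]
  have hMMpos : (0:ℝ) < M ^ M := Real.rpow_pos_of_pos hM _
  have := le_of_mul_le_mul_right hfinal hMMpos
  linarith

end AuxLemmas

/-- Let `n ≥ 3` and `K ⊆ ℝⁿ` be a centrally symmetric convex polytope with nonempty
interior having exactly `2m` vertices, `m ≥ n`. Let `t = 2^(n/m)`, `b = b(t)` the
positive solution of `g b = t`, and `l = l(m,t)` the nonnegative integer with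
`2^l·C(m+l, m) ≤ t^m < 2^(l+1)·C(m+l+1, m)`. Then
`Γ_{2^n}(K) ≤ m/(m+l) ≤ m/(m+⌊b·m⌋)`. -/
theorem coveringFunctional_symmetric_polytope_le (n m : ℕ) (hn : 3 ≤ n) (hm : n ≤ m)
    (K : Set (Fin n → ℝ))
    (hpoly : ∃ V : Finset (Fin n → ℝ), K = convexHull ℝ (V : Set (Fin n → ℝ)))
    (hint : (interior K).Nonempty)
    (hsym : ∃ c : Fin n → ℝ, ∀ x, x ∈ K ↔ c + c - x ∈ K)
    (hvert : (Set.extremePoints ℝ K).ncard = 2 * m)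
    (t : ℝ) (ht : t = (2 : ℝ) ^ ((n : ℝ) / (m : ℝ)))
    (b : ℝ) (hb : 0 < b) (hgb : g b = t)
    (l : ℕ) (hl1 : (2 ^ l * (m + l).choose m : ℝ) ≤ t ^ m)
    (hl2 : t ^ m < (2 ^ (l + 1) * (m + l + 1).choose m : ℝ)) :
    coveringFunctional (2 ^ n) K ≤ (m : ℝ) / ((m : ℝ) + l) ∧
      (m : ℝ) / ((m : ℝ) + l) ≤ (m : ℝ) / ((m : ℝ) + (⌊b * (m : ℝ)⌋₊ : ℝ)) := by
  classical
  obtain ⟨V, hV⟩ := hpoly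
  obtain ⟨c, hc⟩ := hsym
  have hm3 : 3 ≤ m := le_trans hn hm
  have hm0 : 0 < m := by omega
  -- basic facts
  have hKconv : Convex ℝ K := hV ▸ convex_convexHull ℝ _
  have hKcomp : IsCompact K := hV ▸ V.finite_toSet.isCompact_convexHull (𝕜 := ℝ)
  set E : Set (Fin n → ℝ) := Set.extremePoints ℝ K with hE
  have hEV : E ⊆ V := by rw [hE, hV]; exact extremePoints_convexHull_subset
  have hEfin : E.Finite := V.finite_toSet.subset hEV
  have hKE : K = convexHull ℝ E := by
    have h1 : closure (convexHull ℝ E) = K := closure_convexHull_extremePoints hKcomp hKconv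
    have h2 : IsClosed (convexHull ℝ E) := (hEfin.isCompact_convexHull (𝕜 := ℝ)).isClosed
    rw [← h1, h2.closure_eq]
  have hEK : E ⊆ K := extremePoints_subset
  -- the symmetry involution
  set ι : (Fin n → ℝ) → (Fin n → ℝ) := fun x => c + c - x with hι
  have hιinv : ∀ x, ι (ι x) = x := by intro x; simp [hι]
  have hιseg : ∀ x₁ x₂ x, x ∈ openSegment ℝ x₁ x₂ → ι x ∈ openSegment ℝ (ι x₁) (ι x₂) := by
    rintro x₁ x₂ x ⟨a, b', ha, hb', hab, rfl⟩
    refine ⟨a, b', ha, hb', hab, ?_⟩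
    have key : a • ι x₁ + b' • ι x₂ = (a + b') • (c + c) - (a • x₁ + b' • x₂) := by
      simp only [hι]; module
    rw [key, hab, one_smul, hι]
  have hιE : ∀ x ∈ E, ι x ∈ E := by
    intro x hx
    rw [hE, mem_extremePoints] at hx ⊢
    refine ⟨(hc x).mp hx.1, ?_⟩
    intro x₁ hx₁ x₂ hx₂ hseg
    have h1 : ι (ι x) ∈ openSegment ℝ (ι x₁) (ι x₂) := hιseg _ _ _ hseg
    rw [hιinv] at h1
    have h2 := hx.2 (ι x₁) ((hc x₁).mp hx₁) (ι x₂) ((hc x₂).mp hx₂) h1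
    constructor
    · rw [← hιinv x₁, h2.1]
    · rw [← hιinv x₂, h2.2]
  -- c is interior, hence not extreme
  have hcint : c ∈ interior K := by
    obtain ⟨u, hu⟩ := hint
    have hu' : ι u ∈ K := (hc u).mp (interior_subset hu)
    have := hKconv.combo_interior_self_mem_interior hu hu'
      (by norm_num : (0:ℝ) < 1/2) (by norm_num : (0:ℝ) ≤ 1/2) (by norm_num)
    convert this using 1
    simp only [hι]
    module
  have hcE : c ∉ E := by
    intro hcE
    obtain ⟨ε, hε, hball⟩ := Metric.isOpen_iff.mp isOpen_interior c hcint
    set d : Fin n → ℝ := (ε/2) • (Pi.single (⟨0, by omega⟩ : Fin n) (1:ℝ) : Fin n → ℝ) with hd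
    have hdnorm : ‖d‖ = ε/2 := by
      rw [hd, norm_smul, Pi.norm_single, norm_one, Real.norm_eq_abs, abs_of_pos (by linarith), mul_one]
    have hd0 : d ≠ 0 := by
      intro h
      have := congrArg (fun f => f (⟨0, by omega⟩ : Fin n)) h
      simp [hd, Pi.single_apply] at this
      linarith
    have h1 : c + d ∈ K := interior_subset (hball (by
      rw [Metric.mem_ball, dist_eq_norm, add_sub_cancel_left, hdnorm]; linarith))
    have h2 : c - d ∈ K := interior_subset (hball (by
      rw [Metric.mem_ball, dist_eq_norm, sub_sub_cancel_left, norm_neg, hdnorm]; linarith))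
    rw [hE, mem_extremePoints] at hcE
    have hseg : c ∈ openSegment ℝ (c + d) (c - d) :=
      ⟨1/2, 1/2, by norm_num, by norm_num, by norm_num, by module⟩
    have := (hcE.2 (c + d) h1 (c - d) h2 hseg).1
    apply hd0
    have := congrArg (fun z => z - c) this
    simpa using this

  -- pairing of extreme points
  set Ef : Finset (Fin n → ℝ) := hEfin.toFinset with hEf
  have hEfmem : ∀ x, x ∈ Ef ↔ x ∈ E := fun x => hEfin.mem_toFinset
  have hEfcard : Ef.card = 2 * m := by
    rw [← hvert, hEf]
    exact (Set.ncard_eq_toFinset_card _ hEfin).symm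
  obtain ⟨w, hwE, hwcov⟩ := aux_pairing m Ef ι
    (fun x hx => (hEfmem _).mpr (hιE x ((hEfmem _).mp hx)))
    (fun x _ => hιinv x)
    (fun x hx hfix => by
      apply hcE
      have hxc : x = c := by
        funext j
        have h' := congrFun hfix j
        simp only [hι, Pi.add_apply, Pi.sub_apply] at h'
        linarith
      rw [← hxc]
      exact (hEfmem x).mp hx)
    hEfcard
  set wv : Fin m → (Fin n → ℝ) := fun i => w i - c with hwv
  have hplus : ∀ i, c + wv i ∈ K := by
    intro i
    have h1 : c + wv i = w i := by simp only [hwv]; module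
    rw [h1]; exact hEK ((hEfmem _).mp (hwE i))
  have hminus : ∀ i, c - wv i ∈ K := by
    intro i
    have h1 : c - wv i = ι (w i) := by simp only [hwv, hι]; module
    rw [h1]; exact hEK (hιE _ ((hEfmem _).mp (hwE i)))
  -- K is inside the absolute hull of the wv
  have hKA : K ⊆ {y : Fin n → ℝ | ∃ lam : Fin m → ℝ, (∑ i, |lam i|) ≤ 1 ∧ y = c + ∑ i, lam i • wv i} := by
    rw [hKE]
    apply convexHull_min _ (aux_absHull_convex c wv)
    intro e he
    obtain ⟨i, hi⟩ := hwcov e ((hEfmem _).mpr he)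
    have hsingle_abs : (∑ j, |(Pi.single i (1:ℝ) : Fin m → ℝ) j|) = 1 := by
      simp [Pi.single_apply, apply_ite abs]
    have hsingle_sum : (∑ j, (Pi.single i (1:ℝ) : Fin m → ℝ) j • wv j) = wv i := by
      simp [Pi.single_apply, ite_smul]
    rcases hi with h | h
    · refine ⟨Pi.single i 1, le_of_eq hsingle_abs, ?_⟩
      rw [hsingle_sum, h]; simp only [hwv]; module
    · refine ⟨fun j => -(Pi.single i (1:ℝ) : Fin m → ℝ) j, ?_, ?_⟩
      · simp only [abs_neg]
        exact le_of_eq hsingle_abs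
      · simp only [neg_smul, Finset.sum_neg_distrib]
        rw [hsingle_sum, h]; simp only [hι, hwv]; module
  -- numeric setup
  have hmR : (0:ℝ) < (m:ℝ) := by exact_mod_cast hm0
  set R : ℝ := (m:ℝ) + (l:ℝ) with hR
  have hRpos : 0 < R := by rw [hR]; positivity
  set γ : ℝ := (m:ℝ) / R with hγdef
  have hγ : 0 < γ := by rw [hγdef]; positivity
  have hγR : γ * R = (m:ℝ) := by rw [hγdef]; field_simp
  -- t ^ m = 2 ^ n
  have htm : t ^ m = (2:ℝ) ^ (n:ℕ) := by
    rw [ht, ← Real.rpow_natCast ((2:ℝ) ^ ((n:ℝ)/(m:ℝ))) m, ← Real.rpow_mul (by norm_num : (0:ℝ) ≤ 2),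
      div_mul_cancel₀ _ (by exact_mod_cast hm0.ne' : (m:ℝ) ≠ 0), Real.rpow_natCast]
  have hl1nat : 2 ^ l * (m + l).choose m ≤ 2 ^ n := by
    have h1 : (2 ^ l * (m + l).choose m : ℝ) ≤ ((2:ℝ) ^ (n:ℕ)) := htm ▸ hl1
    exact_mod_cast h1
  -- the candidate centers
  obtain ⟨D, hDmem, hDcard⟩ := aux_count m l
  set ctr : (Fin m → ℤ) → (Fin n → ℝ) :=
    fun k => (1 - γ) • c + R⁻¹ • ∑ i, ((k i : ℝ)) • wv i with hctr
  set C₀ : Finset (Fin n → ℝ) := D.image ctr with hC₀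
  have hC₀card : (↑C₀ : Set (Fin n → ℝ)).ncard ≤ 2 ^ n := by
    rw [Set.ncard_coe_finset]
    exact le_trans (Finset.card_image_le) (le_trans hDcard hl1nat)
  have : Nonempty (Fin n) := ⟨⟨0, by omega⟩⟩
  obtain ⟨C, hC₀C, -, hCcard⟩ := Set.Infinite.exists_superset_ncard_eq
    (Set.infinite_univ) (Set.subset_univ (↑C₀ : Set (Fin n → ℝ))) (C₀.finite_toSet) hC₀card
  have hCfin : C.Finite := by
    by_contra hinf
    rw [Set.Infinite.ncard hinf] at hCcard
    have := Nat.one_le_two_pow (n := n)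
    omega
  -- the covering
  have hcov : K ⊆ C + γ • K := by
    intro x hx
    obtain ⟨lam, hlam, hxeq⟩ := hKA hx
    set a : Fin m → ℕ := fun i => ⌊R * |lam i|⌋₊ with ha
    obtain ⟨kk, hkkle, hkksum⟩ := aux_sum_adjust Finset.univ a (min l (∑ i, a i))
      (le_trans (min_le_right _ _) (le_of_eq rfl))
    set kInt : Fin m → ℤ := fun i => if 0 ≤ lam i then (kk i : ℤ) else -(kk i : ℤ) with hkInt
    have hkD : kInt ∈ D := by
      apply (hDmem kInt).mp
      have : ∀ i, (kInt i).natAbs = kk i := by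
        intro i
        rw [hkInt]
        by_cases h : 0 ≤ lam i <;> simp [h]
      calc (∑ i, (kInt i).natAbs) = ∑ i, kk i := Finset.sum_congr rfl fun i _ => this i
        _ = min l (∑ i, a i) := hkksum
        _ ≤ l := min_le_left _ _
    have hkkR : ∀ i, (kk i : ℝ) ≤ R * |lam i| := by
      intro i
      calc (kk i : ℝ) ≤ (a i : ℝ) := by exact_mod_cast hkkle i
        _ ≤ R * |lam i| := Nat.floor_le (by positivity)
    have habs_i : ∀ i, |R * lam i - (kInt i : ℝ)| = R * |lam i| - (kk i : ℝ) := by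
      intro i
      have hk := hkkR i
      rcases le_or_gt 0 (lam i) with h | h
      · have e : (kInt i : ℝ) = (kk i : ℝ) := by rw [hkInt]; simp [h]
        rw [abs_of_nonneg h] at hk ⊢
        rw [e, abs_of_nonneg (by linarith)]
      · have e : (kInt i : ℝ) = -(kk i : ℝ) := by rw [hkInt]; simp [not_le.mpr h]
        rw [abs_of_neg h] at hk ⊢
        rw [e, sub_neg_eq_add, abs_of_nonpos (by linarith)]
        ring
    have hsum_abs : ∑ i, |R * lam i - (kInt i:ℝ)| ≤ (m:ℝ) := by
      rw [Finset.sum_congr rfl fun i _ => habs_i i, Finset.sum_sub_distrib]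
      have hsR : ∑ i, R * |lam i| ≤ R := by
        rw [← Finset.mul_sum]
        exact mul_le_of_le_one_right hRpos.le hlam
      rcases le_or_gt l (∑ i, a i) with hcase | hcase
      · have : ∑ i, (kk i : ℝ) = (l:ℝ) := by
          rw [← Nat.cast_sum, hkksum, min_eq_left hcase]
        rw [this]
        rw [hR] at hsR
        linarith
      · have hkka : ∑ i, (kk i : ℝ) = ∑ i, (a i : ℝ) := by
          rw [← Nat.cast_sum, ← Nat.cast_sum, hkksum, min_eq_right hcase.le]
        rw [hkka]
        have hterm : ∀ i, R * |lam i| - (a i : ℝ) ≤ 1 := by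
          intro i
          have := Nat.lt_floor_add_one (R * |lam i|)
          rw [ha]
          push_cast
          linarith
        calc ∑ i, R * |lam i| - ∑ i, (a i:ℝ) = ∑ i, (R * |lam i| - (a i:ℝ)) := by
              rw [Finset.sum_sub_distrib]
          _ ≤ ∑ _i : Fin m, (1:ℝ) := Finset.sum_le_sum fun i _ => hterm i
          _ = (m:ℝ) := by simp
    set nu : Fin m → ℝ := fun i => γ⁻¹ * (lam i - (kInt i:ℝ)/R) with hnu
    have hnusum : ∑ i, |nu i| ≤ 1 := by
      have h1 : ∀ i, |nu i| = γ⁻¹ * (R⁻¹ * |R * lam i - (kInt i:ℝ)|) := by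
        intro i
        rw [hnu]
        rw [abs_mul, abs_of_nonneg (by positivity : (0:ℝ) ≤ γ⁻¹)]
        congr 1
        have e : lam i - (kInt i:ℝ)/R = R⁻¹ * (R * lam i - (kInt i:ℝ)) := by
          field_simp
        rw [e, abs_mul, abs_of_nonneg (by positivity : (0:ℝ) ≤ R⁻¹)]
      rw [Finset.sum_congr rfl fun i _ => h1 i, ← Finset.mul_sum, ← Finset.mul_sum]
      calc γ⁻¹ * (R⁻¹ * ∑ i, |R * lam i - (kInt i:ℝ)|) ≤ γ⁻¹ * (R⁻¹ * (m:ℝ)) := by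
            apply mul_le_mul_of_nonneg_left _ (by positivity)
            exact mul_le_mul_of_nonneg_left hsum_abs (by positivity)
        _ = 1 := by
            rw [hγdef]
            field_simp
    set u : Fin n → ℝ := c + ∑ i, nu i • wv i with hu
    have huK : u ∈ K := aux_abs_mem hm0 hKconv c wv (fun i => ⟨hplus i, hminus i⟩) nu hnusum
    rw [Set.mem_add]
    refine ⟨ctr kInt, hC₀C (by rw [hC₀]; exact Finset.mem_coe.mpr (Finset.mem_image_of_mem _ hkD)), γ • u, Set.smul_mem_smul_set huK, ?_⟩
    -- the algebra : ctr kInt + γ • u = x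
    have hscal : ∀ i, (kInt i : ℝ)/R + γ * nu i = lam i := by
      intro i
      rw [hnu, ← mul_assoc, mul_inv_cancel₀ hγ.ne', one_mul]
      ring
    calc ctr kInt + γ • u
        = ((1 - γ) • c + γ • c) + (∑ i, ((kInt i:ℝ)/R) • wv i + ∑ i, (γ * nu i) • wv i) := by
          simp only [hctr, hu, smul_add, Finset.smul_sum, smul_smul, div_eq_inv_mul]
          abel
      _ = c + ∑ i, lam i • wv i := by
          rw [← add_smul, sub_add_cancel, one_smul, ← Finset.sum_add_distrib]
          congr 1
          refine Finset.sum_congr rfl fun i _ => ?_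
          rw [← add_smul, hscal i]
      _ = x := hxeq.symm
  -- conclude part 1
  have hpart1 : coveringFunctional (2 ^ n) K ≤ (m : ℝ) / ((m : ℝ) + l) := by
    apply csInf_le
    · exact ⟨0, fun x hx => le_of_lt hx.1⟩
    · exact ⟨hγ, C, hCfin, hCcard, hcov⟩
  refine ⟨hpart1, ?_⟩
  -- part 2
  have hfl : ⌊b * (m:ℝ)⌋₊ ≤ l := aux_floor_le m l hm3 b hb t hgb hl2
  have hflR : ((⌊b * (m:ℝ)⌋₊ : ℕ) : ℝ) ≤ (l:ℝ) := by exact_mod_cast hfl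
  apply div_le_div_of_nonneg_left hmR.le (by positivity)
  linarith
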